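/- arXiv:2401.16175 — 4 statements merged into one kernel-verified Lean document; each statement's English description precedes it below -/
import Mathlib

section
/- Let N ≥ 0 and let f(z) = ∑_{k=-N}^{N} c_k z^{-k} be a trigonometric polynomial of degree N (so c_{-k} = conj(c_k) for all k, and f is real-valued on the unit circle). Then f(z) ≥ 0 for every z with |z| = 1 if and only if f is a sum of squares, i.e., there exist finitely many complex polynomials h_1, …, h_r, each of degree at most N, such that f(z) = ∑_{j=1}^{r} h_j(z) · conj(h_j(z)) for all z with |z| = 1. -/
open Matrix BigOperators ComplexOrder
open ComplexOrder Polynomial Finset Filter Topology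

noncomputable def trigP (N : ℕ) (c : ℤ → ℂ) : Polynomial ℂ :=
  ∑ j ∈ range (2*N+1), C (c ((N : ℤ) - j)) * X ^ j

lemma coeff_trigP (N : ℕ) (c : ℤ → ℂ) (j : ℕ) :
    (trigP N c).coeff j = if j ≤ 2*N then c ((N : ℤ) - j) else 0 := by
  rw [trigP, finset_sum_coeff]
  simp only [coeff_C_mul, coeff_X_pow, mul_ite, mul_one, mul_zero]
  rw [Finset.sum_ite_eq]
  simp [Nat.lt_succ_iff]

lemma natDegree_trigP_le (N : ℕ) (c : ℤ → ℂ) : (trigP N c).natDegree ≤ 2*N := by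
  apply Polynomial.natDegree_le_iff_coeff_eq_zero.mpr
  intro j hj
  rw [coeff_trigP, if_neg (by omega)]

lemma eval_trigP (N : ℕ) (c : ℤ → ℂ) {z : ℂ} (hz : z ≠ 0) :
    (trigP N c).eval z = z ^ N * ∑ k ∈ Finset.Icc (-(N : ℤ)) (N : ℤ), c k * z ^ (-k) := by
  rw [trigP, Finset.mul_sum, eval_finset_sum]
  refine Finset.sum_nbij' (fun j => (N : ℤ) - j) (fun k => ((N : ℤ) - k).toNat) ?_ ?_ ?_ ?_ ?_
  · intro j hj; simp only [mem_range, Nat.lt_succ_iff] at hj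
    simp only [Finset.mem_Icc]; omega
  · intro k hk; simp only [Finset.mem_Icc] at hk
    simp only [mem_range, Nat.lt_succ_iff]; omega
  · intro j hj; simp only [mem_range, Nat.lt_succ_iff] at hj; omega
  · intro k hk; simp only [Finset.mem_Icc] at hk; omega
  · intro j hj; simp only [mem_range, Nat.lt_succ_iff] at hj
    rw [eval_mul, eval_C, eval_pow, eval_X]
    rw [mul_comm (z ^ N), mul_assoc]
    congr 1
    rw [← zpow_natCast z N, ← zpow_natCast z j, ← zpow_add₀ hz]
    congr 1; omega

-- uniqueness: a trig poly vanishing on the circle has zero coefficients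
lemma circle_infinite : {z : ℂ | ‖z‖ = 1}.Infinite := by
  have hinj : Set.InjOn (fun θ : ℝ => Complex.exp (θ * Complex.I)) (Set.Ioo 0 1) := by
    intro a ha b hb hab
    simp only at hab
    have : Complex.exp ((a - b) * Complex.I) = 1 := by
      rw [sub_mul, Complex.exp_sub, hab, div_self (Complex.exp_ne_zero _)]
    rw [Complex.exp_eq_one_iff] at this
    obtain ⟨n, hn⟩ := this
    have : ((a - b : ℝ) : ℂ) * Complex.I = (n * (2 * Real.pi)) * Complex.I := by
      push_cast at hn ⊢; rw [hn]; ring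
    have h2 : ((a - b : ℝ) : ℂ) = ((n * (2 * Real.pi) : ℝ) : ℂ) := by
      have := mul_right_cancel₀ Complex.I_ne_zero this; push_cast at this ⊢; exact this
    have h3 : (a - b : ℝ) = n * (2 * Real.pi) := by exact_mod_cast h2
    have hpi := Real.pi_gt_three
    rcases lt_trichotomy (n : ℝ) 0 with h | h | h
    · have : (n : ℝ) ≤ -1 := by exact_mod_cast Int.le_of_lt_add_one (by exact_mod_cast h)
      nlinarith [ha.1, ha.2, hb.1, hb.2]
    · have : a - b = 0 := by rw [h3, h]; ring
      linarith
    · have : (1 : ℝ) ≤ n := by exact_mod_cast h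
      nlinarith [ha.1, ha.2, hb.1, hb.2]
  have : Set.Ioo (0:ℝ) 1 |>.Infinite := Set.Ioo_infinite (by norm_num)
  have := this.image hinj
  apply this.mono
  rintro z ⟨θ, _, rfl⟩
  simp [Complex.norm_exp]

lemma trig_coeffs_zero (M : ℕ) (d : ℤ → ℂ)
    (h : ∀ z : ℂ, ‖z‖ = 1 → ∑ k ∈ Finset.Icc (-(M : ℤ)) (M : ℤ), d k * z ^ (-k) = 0) :
    ∀ k, k ∈ Finset.Icc (-(M : ℤ)) (M : ℤ) → d k = 0 := by
  have hzero : trigP M d = 0 := by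
    apply Polynomial.eq_zero_of_infinite_isRoot
    apply circle_infinite.mono
    intro z hz
    have hz0 : z ≠ 0 := by intro h0; rw [h0] at hz; simp at hz
    simp only [Set.mem_setOf_eq, IsRoot.def]
    rw [eval_trigP M d hz0, h z hz, mul_zero]
  intro k hk
  simp only [Finset.mem_Icc] at hk
  have := congrArg (fun p => Polynomial.coeff p ((M : ℤ) - k).toNat) hzero
  simp only [coeff_trigP, Polynomial.coeff_zero] at this
  rw [if_pos (by omega)] at this
  rwa [show (M : ℤ) - (((M:ℤ) - k).toNat) = k by omega] at this

lemma norm_one_ne_zero {z : ℂ} (hz : ‖z‖ = 1) : z ≠ 0 := by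
  intro h; rw [h] at hz; simp at hz

lemma star_of_norm_one {z : ℂ} (hz : ‖z‖ = 1) : star z = z⁻¹ := by
  have : z * star z = 1 := by
    rw [mul_comm, Complex.star_def, Complex.conj_mul']
    norm_cast
    simp [hz]
  field_simp [norm_one_ne_zero hz] at this ⊢
  linear_combination this

lemma trig_real (N : ℕ) (c : ℤ → ℂ) (hsymm : ∀ k, c (-k) = star (c k)) {z : ℂ} (hz : ‖z‖ = 1) :
    star (∑ k ∈ Finset.Icc (-(N:ℤ)) (N:ℤ), c k * z ^ (-k))
      = ∑ k ∈ Finset.Icc (-(N:ℤ)) (N:ℤ), c k * z ^ (-k) := by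
  have hz0 := norm_one_ne_zero hz
  rw [star_sum]
  refine Finset.sum_nbij' (fun k => -k) (fun k => -k) ?_ ?_ ?_ ?_ ?_
  · intro k hk; simp only [Finset.mem_Icc] at hk ⊢; omega
  · intro k hk; simp only [Finset.mem_Icc] at hk ⊢; omega
  · intro k _; ring
  · intro k _; ring
  · intro k _
    rw [star_mul', ← hsymm, star_zpow₀, star_of_norm_one hz, _root_.inv_zpow, ← _root_.zpow_neg, neg_neg, mul_comm]

lemma trig_selfinv (N : ℕ) (c : ℤ → ℂ) (hsymm : ∀ k, c (-k) = star (c k)) {z : ℂ} (hz : z ≠ 0) :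
    (trigP N c).eval z = z ^ (2*N) * star ((trigP N c).eval ((star z)⁻¹)) := by
  have hb : (trigP N c).natDegree < 2*N+1 := Nat.lt_succ_of_le (natDegree_trigP_le N c)
  rw [Polynomial.eval_eq_sum_range' hb, Polynomial.eval_eq_sum_range' hb]
  rw [← Finset.sum_range_reflect]
  rw [star_sum, Finset.mul_sum]
  refine Finset.sum_congr rfl ?_
  intro j hj
  simp only [mem_range, Nat.lt_succ_iff] at hj
  have h1 : (trigP N c).coeff (2*N+1-1-j) = star ((trigP N c).coeff j) := by
    rw [coeff_trigP, coeff_trigP, if_pos (by omega), if_pos (by omega), ← hsymm]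
    congr 1
    push_cast [show 2*N+1-1-j = 2*N-j by omega, Nat.cast_sub (by omega : j ≤ 2*N)]
    ring
  rw [h1, star_mul', star_pow, star_inv₀, star_star]
  rw [show 2*N+1-1-j = 2*N-j by omega]
  rw [pow_sub₀ z hz hj, inv_pow]
  ring


lemma root_on_circle (N : ℕ) (q : Polynomial ℂ) (α : ℂ) (hα : ‖α‖ = 1)
    (h : ∀ z : ℂ, ‖z‖ = 1 → 0 ≤ (z - α) * (z ^ (-(N:ℤ)) * q.eval z)) :
    q.eval α = 0 := by
  have hα0 : α ≠ 0 := fun h0 => by rw [h0] at hα; simp at hα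
  set H : ℂ → ℂ := fun z => z ^ (-(N:ℤ)) * q.eval z with hH
  have hHc : ContinuousAt H α := by
    apply ContinuousAt.mul
    · exact continuousAt_zpow₀ α _ (Or.inl hα0)
    · exact (Polynomial.continuous q).continuousAt
  set φ : ℝ → ℂ := fun θ => α * Complex.exp (θ * Complex.I) with hφ
  have hφ0 : φ 0 = α := by simp [hφ]
  have hφnorm : ∀ θ : ℝ, ‖φ θ‖ = 1 := by
    intro θ
    simp only [hφ, norm_mul, hα, one_mul, Complex.norm_exp_ofReal_mul_I]
  have hφderiv : HasDerivAt φ (α * Complex.I) 0 := by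
    have h1 : HasDerivAt (fun θ : ℝ => (θ : ℂ) * Complex.I) Complex.I 0 := by
      simpa using (Complex.ofRealCLM.hasDerivAt (x := (0:ℝ))).mul_const Complex.I
    have h2 := h1.cexp
    simpa [hφ] using h2.const_mul α
  have hslope : Tendsto (fun θ : ℝ => (φ θ - α) / θ * H (φ θ)) (𝓝[≠] 0)
      (𝓝 (α * Complex.I * H α)) := by
    have hs := hasDerivAt_iff_tendsto_slope.mp hφderiv
    have hs' : Tendsto (fun θ : ℝ => (φ θ - α) / θ) (𝓝[≠] 0) (𝓝 (α * Complex.I)) := by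
      refine hs.congr' ?_
      filter_upwards [self_mem_nhdsWithin] with θ hθ
      simp [slope, hφ0, div_eq_inv_mul]
    have hφcont : Tendsto φ (𝓝[≠] (0:ℝ)) (𝓝 α) := by
      have hc : ContinuousAt φ 0 := by
        apply ContinuousAt.mul continuousAt_const
        exact (Complex.continuous_exp.comp (by continuity)).continuousAt
      rw [← hφ0]
      exact hc.tendsto.mono_left nhdsWithin_le_nhds
    exact hs'.mul (hHc.tendsto.comp hφcont)
  set L : ℂ := α * Complex.I * H α with hL
  have hval : ∀ θ : ℝ, (φ θ - α) / θ * H (φ θ)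
      = ((((φ θ - α) * H (φ θ)).re / θ : ℝ) : ℂ) := by
    intro θ
    have hnn := h (φ θ) (hφnorm θ)
    have him0 : ((φ θ - α) * H (φ θ)).im = 0 := by
      have h2 := (Complex.le_def.mp hnn).2
      rw [← h2]; exact Complex.zero_im
    have hw : (φ θ - α) * H (φ θ) = ((((φ θ - α) * H (φ θ)).re : ℝ) : ℂ) := by
      apply Complex.ext <;> simp [him0]
    calc (φ θ - α) / θ * H (φ θ) = ((φ θ - α) * H (φ θ)) / (θ:ℂ) := by ring
      _ = ((((φ θ - α) * H (φ θ)).re : ℝ) : ℂ) / (θ:ℂ) := by rw [← hw]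
      _ = _ := by rw [← Complex.ofReal_div]
  have hsubR : 𝓝[>] (0:ℝ) ≤ 𝓝[≠] (0:ℝ) := nhdsWithin_mono 0 (fun x hx => ne_of_gt hx)
  have hsubL : 𝓝[<] (0:ℝ) ≤ 𝓝[≠] (0:ℝ) := nhdsWithin_mono 0 (fun x hx => ne_of_lt hx)
  have hTim : Tendsto (fun θ : ℝ => ((φ θ - α) / θ * H (φ θ)).im) (𝓝[≠] 0) (𝓝 L.im) :=
    (Complex.continuous_im.tendsto L).comp hslope
  have him : L.im = 0 := by
    have h0 : Tendsto (fun θ : ℝ => ((φ θ - α) / θ * H (φ θ)).im) (𝓝[≠] 0) (𝓝 0) := by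
      apply Tendsto.congr (fun θ => ?_) tendsto_const_nhds
      rw [hval θ, Complex.ofReal_im]
    exact tendsto_nhds_unique hTim h0
  have hTre : Tendsto (fun θ : ℝ => ((φ θ - α) / θ * H (φ θ)).re) (𝓝[≠] 0) (𝓝 L.re) :=
    (Complex.continuous_re.tendsto L).comp hslope
  have hreR : 0 ≤ L.re := by
    refine ge_of_tendsto (hTre.mono_left hsubR) ?_
    filter_upwards [self_mem_nhdsWithin] with θ hθ
    rw [hval θ, Complex.ofReal_re]
    apply div_nonneg _ (le_of_lt hθ)
    exact (Complex.le_def.mp (h (φ θ) (hφnorm θ))).1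
  have hreL : L.re ≤ 0 := by
    refine le_of_tendsto (hTre.mono_left hsubL) ?_
    filter_upwards [self_mem_nhdsWithin] with θ hθ
    rw [hval θ, Complex.ofReal_re]
    apply div_nonpos_of_nonneg_of_nonpos
    · exact (Complex.le_def.mp (h (φ θ) (hφnorm θ))).1
    · exact le_of_lt hθ
  have hL0 : α * Complex.I * H α = 0 := by
    rw [← hL]; apply Complex.ext
    · exact le_antisymm hreL hreR
    · exact him
  have hHα : H α = 0 := by
    rcases mul_eq_zero.mp hL0 with h1 | h1
    · rcases mul_eq_zero.mp h1 with h2 | h2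
      · exact absurd h2 hα0
      · exact absurd h2 Complex.I_ne_zero
    · exact h1
  rw [hH] at hHα
  simp only at hHα
  rcases mul_eq_zero.mp hHα with h1 | h1
  · exact absurd h1 (zpow_ne_zero _ hα0)
  · exact h1

open Filter Topology in
lemma circle_limit (α : ℂ) (hα : ‖α‖ = 1) (G : ℂ → ℂ) (hG : ContinuousAt G α)
    (hS : ∀ z : ℂ, ‖z‖ = 1 → z ≠ α → 0 ≤ G z) : 0 ≤ G α := by
  set φ : ℝ → ℂ := fun θ => α * Complex.exp (θ * Complex.I) with hφ
  have hφ0 : φ 0 = α := by simp [hφ]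
  have hφnorm : ∀ θ : ℝ, ‖φ θ‖ = 1 := by
    intro θ
    simp only [hφ, norm_mul, hα, one_mul, Complex.norm_exp_ofReal_mul_I]
  have hT : Tendsto (fun θ : ℝ => G (φ θ)) (𝓝[>] (0:ℝ)) (𝓝 (G α)) := by
    have hc : ContinuousAt φ 0 := by
      apply ContinuousAt.mul continuousAt_const
      exact (Complex.continuous_exp.comp (by continuity)).continuousAt
    have : Tendsto φ (𝓝[>] (0:ℝ)) (𝓝 α) := by
      rw [← hφ0]; exact hc.tendsto.mono_left nhdsWithin_le_nhds
    exact hG.tendsto.comp this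
  have hmem : Set.Ioo (0:ℝ) 1 ∈ 𝓝[>] (0:ℝ) := Ioo_mem_nhdsGT_of_mem ⟨le_refl _, one_pos⟩
  have hne : ∀ θ ∈ Set.Ioo (0:ℝ) 1, φ θ ≠ α := by
    intro θ hθ habs
    have hα0 : α ≠ 0 := fun h0 => by rw [h0] at hα; simp at hα
    have : Complex.exp (θ * Complex.I) = 1 := by
      simp only [hφ] at habs
      exact mul_left_cancel₀ hα0 (habs.trans (mul_one α).symm)
    rw [Complex.exp_eq_one_iff] at this
    obtain ⟨m, hm⟩ := this
    have hm' : (θ : ℂ) = ((m * (2 * Real.pi) : ℝ) : ℂ) := by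
      have h2 : (θ : ℂ) * Complex.I = ((m * (2 * Real.pi) : ℝ) : ℂ) * Complex.I := by
        push_cast at hm ⊢
        linear_combination hm
      exact mul_right_cancel₀ Complex.I_ne_zero h2
    have : θ = m * (2 * Real.pi) := by exact_mod_cast hm'
    have hpi := Real.pi_gt_three
    rcases lt_trichotomy (m : ℝ) 0 with h | h | h
    · have : (m : ℝ) ≤ -1 := by exact_mod_cast Int.le_of_lt_add_one (by exact_mod_cast h)
      nlinarith [hθ.1, hθ.2]
    · have : θ = 0 := by rw [this, h]; ring
      linarith [hθ.1]
    · have : (1 : ℝ) ≤ m := by exact_mod_cast h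
      nlinarith [hθ.1, hθ.2]
  have hEV : ∀ᶠ θ in 𝓝[>] (0:ℝ), 0 ≤ G (φ θ) := by
    filter_upwards [hmem] with θ hθ
    exact hS (φ θ) (hφnorm θ) (hne θ hθ)
  rw [Complex.le_def]
  constructor
  · refine ge_of_tendsto ((Complex.continuous_re.tendsto _).comp hT) ?_
    filter_upwards [hEV] with θ hθ
    simpa using (Complex.le_def.mp hθ).1
  · have h1 : Tendsto (fun θ : ℝ => (G (φ θ)).im) (𝓝[>] (0:ℝ)) (𝓝 (G α).im) :=
      (Complex.continuous_im.tendsto _).comp hT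
    have h2 : Tendsto (fun θ : ℝ => (G (φ θ)).im) (𝓝[>] (0:ℝ)) (𝓝 0) := by
      refine Tendsto.congr' ?_ tendsto_const_nhds
      filter_upwards [hEV] with θ hθ
      exact (Complex.le_def.mp hθ).2
    simpa using (tendsto_nhds_unique h1 h2).symm

lemma star_trig_sum (M : ℕ) (c : ℤ → ℂ) {z : ℂ} (hz : ‖z‖ = 1) :
    star (∑ k ∈ Finset.Icc (-(M:ℤ)) (M:ℤ), c k * z ^ (-k))
      = ∑ k ∈ Finset.Icc (-(M:ℤ)) (M:ℤ), star (c (-k)) * z ^ (-k) := by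
  have hz0 := norm_one_ne_zero hz
  rw [star_sum]
  refine Finset.sum_nbij' (fun k => -k) (fun k => -k) ?_ ?_ ?_ ?_ ?_
  · intro k hk; simp only [Finset.mem_Icc] at hk ⊢; omega
  · intro k hk; simp only [Finset.mem_Icc] at hk ⊢; omega
  · intro k _; ring
  · intro k _; ring
  · intro k _
    rw [star_mul', star_zpow₀, star_of_norm_one hz, _root_.inv_zpow, ← _root_.zpow_neg, neg_neg]

-- a positive real scalar can be cancelled from a complex inequality
lemma pos_real_mul_nonneg {t : ℝ} (ht : 0 < t) {w : ℂ} (h : 0 ≤ (t : ℂ) * w) : 0 ≤ w := by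
  rw [Complex.le_def] at h ⊢
  constructor
  · have := h.1
    simp only [Complex.zero_re, Complex.mul_re, Complex.ofReal_re, Complex.ofReal_im,
      zero_mul, sub_zero] at this ⊢
    nlinarith
  · have := h.2
    simp only [Complex.zero_im, Complex.mul_im, Complex.ofReal_re, Complex.ofReal_im,
      zero_mul, add_zero] at this ⊢
    have ht' : t ≠ 0 := ne_of_gt ht
    field_simp at this
    exact ((mul_eq_zero.mp this.symm).resolve_left ht').symm

lemma star_eq_self_of_nonneg {w : ℂ} (h : 0 ≤ w) : star w = w := by
  have him : w.im = 0 := ((Complex.le_def.mp h).2).symm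
  apply Complex.ext <;> simp [him]

theorem fejer_riesz : ∀ (N : ℕ) (c : ℤ → ℂ), (∀ k : ℤ, c (-k) = star (c k)) →
    (∀ z : ℂ, ‖z‖ = 1 → 0 ≤ ∑ k ∈ Finset.Icc (-(N : ℤ)) (N : ℤ), c k * z ^ (-k)) →
    ∃ h : Polynomial ℂ, h.natDegree ≤ N ∧ ∀ z : ℂ, ‖z‖ = 1 →
      (∑ k ∈ Finset.Icc (-(N : ℤ)) (N : ℤ), c k * z ^ (-k)) = h.eval z * star (h.eval z) := by
  intro N
  induction N with
  | zero =>
    intro c hsymm hnn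
    have h0 : ∀ z : ℂ, (∑ k ∈ Finset.Icc (-((0:ℕ):ℤ)) ((0:ℕ):ℤ), c k * z ^ (-k)) = c 0 := by
      intro z; simp
    have hc0 := hnn 1 (by simp)
    rw [h0 1] at hc0
    have hre : 0 ≤ (c 0).re := by simpa using (Complex.le_def.mp hc0).1
    have him : (c 0).im = 0 := by simpa using ((Complex.le_def.mp hc0).2).symm
    refine ⟨Polynomial.C ((Real.sqrt (c 0).re : ℝ) : ℂ), by simp, ?_⟩
    intro z hz
    rw [h0 z, Polynomial.eval_C]
    rw [Complex.star_def, Complex.conj_ofReal, ← Complex.ofReal_mul,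
      Real.mul_self_sqrt hre]
    apply Complex.ext <;> simp [him]
  | succ n ih =>
    intro c hsymm hnn
    have hcast : ((n+1 : ℕ) : ℤ) = (n : ℤ) + 1 := by push_cast; ring
    by_cases hcN : c ((n+1 : ℕ) : ℤ) = 0
    · -- endpoint coefficients vanish: reduce to degree n
      have hsub : Finset.Icc (-(n:ℤ)) (n:ℤ) ⊆ Finset.Icc (-((n+1:ℕ):ℤ)) ((n+1:ℕ):ℤ) :=
        Finset.Icc_subset_Icc (by omega) (by omega)
      have hsum : ∀ z : ℂ, (∑ k ∈ Finset.Icc (-((n+1:ℕ):ℤ)) ((n+1:ℕ):ℤ), c k * z ^ (-k))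
          = ∑ k ∈ Finset.Icc (-(n:ℤ)) (n:ℤ), c k * z ^ (-k) := by
        intro z
        rw [← Finset.sum_subset hsub]
        intro k hk hk2
        simp only [Finset.mem_Icc] at hk hk2
        have : k = -((n+1:ℕ):ℤ) ∨ k = ((n+1:ℕ):ℤ) := by omega
        rcases this with rfl | rfl
        · rw [neg_neg, hsymm, hcN, star_zero, zero_mul]
        · rw [hcN, zero_mul]
      obtain ⟨h, hdeg, hval⟩ := ih c hsymm (fun z hz => (hsum z) ▸ hnn z hz)
      exact ⟨h, hdeg.trans (Nat.le_succ n), fun z hz => (hsum z).trans (hval z hz)⟩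
    · -- main case: factor out a root
      set N : ℕ := n + 1 with hNdef
      set p : Polynomial ℂ := trigP N c with hpdef
      have hple := natDegree_trigP_le N c
      have hcoeff0 : p.coeff 0 = c (N : ℤ) := by
        rw [hpdef, coeff_trigP, if_pos (by omega)]; norm_num
      have hcoefftop : p.coeff (2*N) = star (c (N : ℤ)) := by
        rw [hpdef, coeff_trigP, if_pos le_rfl, ← hsymm]
        congr 1; push_cast; ring
      have hcN' : c ((N : ℕ) : ℤ) ≠ 0 := hcN
      have hp0 : p ≠ 0 := by
        intro h0
        apply hcN'
        rw [← hcoeff0, h0, Polynomial.coeff_zero]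
      have hdegp : p.natDegree = 2*N := by
        refine le_antisymm hple (Polynomial.le_natDegree_of_ne_zero ?_)
        rw [hcoefftop]
        exact star_ne_zero.mpr hcN'
      have hdpos : 0 < p.degree := by
        rw [Polynomial.degree_eq_natDegree hp0, hdegp]
        exact_mod_cast by omega
      obtain ⟨α, hαroot⟩ := Complex.exists_root hdpos
      have hα0 : α ≠ 0 := by
        intro h0
        rw [h0] at hαroot
        have : p.coeff 0 = 0 := by
          rw [Polynomial.coeff_zero_eq_eval_zero]; exact hαroot
        rw [hcoeff0] at this
        exact hcN' this
      obtain ⟨q₁, hq₁⟩ := Polynomial.dvd_iff_isRoot.mpr hαroot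
      -- produce β, u, q with p = (X-Cα)(X-Cβ) q and the circle scalar identity
      obtain ⟨β, u, q, hfact, hscal⟩ :
          ∃ (β u : ℂ) (q : Polynomial ℂ),
            p = (Polynomial.X - Polynomial.C α) * (Polynomial.X - Polynomial.C β) * q ∧
            ∀ z : ℂ, ‖z‖ = 1 → (z - α) * (z - β) = z * u * ((z - α) * star (z - α)) := by
        by_cases hαc : ‖α‖ = 1
        · -- root on the circle: double root
          have hq₁α : q₁.eval α = 0 := by
            apply root_on_circle N q₁ α hαc
            intro z hz
            have hz0 := norm_one_ne_zero hz
            have e1 : p.eval z = z^N * ∑ k ∈ Finset.Icc (-(N:ℤ)) (N:ℤ), c k * z ^ (-k) :=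
              eval_trigP N c hz0
            have e2 : p.eval z = (z - α) * q₁.eval z := by
              rw [hq₁]; simp [Polynomial.eval_mul]
            have e3 : (z - α) * (z ^ (-(N:ℤ)) * q₁.eval z)
                = ∑ k ∈ Finset.Icc (-(N:ℤ)) (N:ℤ), c k * z ^ (-k) := by
              have hzpow : (z:ℂ) ^ (-(N:ℤ)) = (z^N)⁻¹ := by
                rw [_root_.zpow_neg, zpow_natCast]
              rw [hzpow]
              have hzN : (z:ℂ)^N ≠ 0 := pow_ne_zero _ hz0
              calc (z - α) * ((z^N)⁻¹ * q₁.eval z)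
                  = (z^N)⁻¹ * ((z - α) * q₁.eval z) := by ring
                _ = (z^N)⁻¹ * (p.eval z) := by rw [← e2]
                _ = (z^N)⁻¹ * (z^N * ∑ k ∈ Finset.Icc (-(N:ℤ)) (N:ℤ), c k * z ^ (-k)) := by
                    rw [e1]
                _ = _ := by rw [← mul_assoc, inv_mul_cancel₀ hzN, one_mul]
            rw [e3]
            exact hnn z hz
          obtain ⟨q, hq⟩ := Polynomial.dvd_iff_isRoot.mpr hq₁α
          refine ⟨α, -α, q, by rw [hq₁, hq]; ring, ?_⟩
          intro z hz
          have hz0 := norm_one_ne_zero hz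
          rw [star_sub, star_of_norm_one hz, star_of_norm_one hαc]
          field_simp
          ring
        · -- root off the circle: reflected root
          set β : ℂ := (star α)⁻¹ with hβdef
          have hsα : star α ≠ 0 := star_ne_zero.mpr hα0
          have hβ0 : β ≠ 0 := inv_ne_zero hsα
          have hβα : β ≠ α := by
            intro h0
            apply hαc
            rw [hβdef] at h0
            have h1 : α * star α = 1 := by
              nth_rewrite 1 [← h0]
              exact inv_mul_cancel₀ hsα
            have h2 : Complex.normSq α = 1 := by
              have := Complex.mul_conj α
              rw [← Complex.star_def] at this
              rw [h1] at this
              exact_mod_cast this.symm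
            have h3 : ‖α‖ ^ 2 = 1 := by rw [Complex.sq_norm, h2]
            nlinarith [norm_nonneg α]
          have hβroot : p.eval β = 0 := by
            have hsi := trig_selfinv N c hsymm hβ0
            have : (star β)⁻¹ = α := by
              rw [hβdef, star_inv₀, star_star, inv_inv]
            rw [← hpdef] at hsi
            rw [hsi, this, show Polynomial.eval α p = 0 from hαroot, star_zero, mul_zero]
          have hq₁β : q₁.eval β = 0 := by
            have : (β - α) * q₁.eval β = 0 := by
              rw [← hβroot, hq₁]; simp [Polynomial.eval_mul]
            rcases mul_eq_zero.mp this with h1 | h1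
            · exact absurd (sub_eq_zero.mp h1) hβα
            · exact h1
          obtain ⟨q, hq⟩ := Polynomial.dvd_iff_isRoot.mpr hq₁β
          refine ⟨β, -β, q, by rw [hq₁, hq]; ring, ?_⟩
          intro z hz
          have hz0 := norm_one_ne_zero hz
          have hβstar : β * star α = 1 := inv_mul_cancel₀ hsα
          rw [star_sub, star_of_norm_one hz]
          have hstar_α_eq : star α = β⁻¹ := by rw [hβdef, inv_inv]
          rw [hstar_α_eq]
          field_simp
          ring
      -- degree bookkeeping
      have hq0 : q ≠ 0 := by
        intro h0; rw [h0, mul_zero] at hfact; exact hp0 hfact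
      have hqdeg : q.natDegree = 2*n := by
        have hd := hdegp
        rw [hfact, Polynomial.natDegree_mul
            (mul_ne_zero (Polynomial.X_sub_C_ne_zero α) (Polynomial.X_sub_C_ne_zero β)) hq0,
          Polynomial.natDegree_mul (Polynomial.X_sub_C_ne_zero α) (Polynomial.X_sub_C_ne_zero β),
          Polynomial.natDegree_X_sub_C, Polynomial.natDegree_X_sub_C] at hd
        omega
      set Q : Polynomial ℂ := Polynomial.C u * q with hQdef
      have hQdeg : Q.natDegree ≤ 2*n :=
        (Polynomial.natDegree_C_mul_le u q).trans (le_of_eq hqdeg)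
      set c' : ℤ → ℂ :=
        fun k => if -(n:ℤ) ≤ k ∧ k ≤ (n:ℤ) then Q.coeff ((n:ℤ) - k).toNat else 0 with hc'def
      have hc'P : trigP n c' = Q := by
        apply Polynomial.ext
        intro j
        rw [coeff_trigP]
        split_ifs with hj
        · rw [hc'def]
          simp only
          rw [if_pos (by omega)]
          congr 1
          omega
        · symm
          apply Polynomial.coeff_eq_zero_of_natDegree_lt
          omega
      have hkey : ∀ z : ℂ, ‖z‖ = 1 →
          (∑ k ∈ Finset.Icc (-(N:ℤ)) (N:ℤ), c k * z ^ (-k))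
            = ((z - α) * star (z - α)) * ∑ k ∈ Finset.Icc (-(n:ℤ)) (n:ℤ), c' k * z ^ (-k) := by
        intro z hz
        have hz0 := norm_one_ne_zero hz
        have e1 : p.eval z = z^N * ∑ k ∈ Finset.Icc (-(N:ℤ)) (N:ℤ), c k * z ^ (-k) :=
          eval_trigP N c hz0
        have e2 : Q.eval z = z^n * ∑ k ∈ Finset.Icc (-(n:ℤ)) (n:ℤ), c' k * z ^ (-k) := by
          rw [← hc'P]; exact eval_trigP n c' hz0
        have e3 : p.eval z = (z - α) * (z - β) * q.eval z := by
          rw [hfact]; simp [Polynomial.eval_mul]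
        have e5 : Q.eval z = u * q.eval z := by rw [hQdef]; simp
        have hzN : (z:ℂ)^N ≠ 0 := pow_ne_zero _ hz0
        have e6 : z^N * (∑ k ∈ Finset.Icc (-(N:ℤ)) (N:ℤ), c k * z ^ (-k))
            = z^N * (((z - α) * star (z - α))
                * ∑ k ∈ Finset.Icc (-(n:ℤ)) (n:ℤ), c' k * z ^ (-k)) := by
          rw [← e1, e3, hscal z hz]
          have hzsplit : (z:ℂ)^N = z * z^n := by rw [hNdef, pow_succ]; ring
          rw [hzsplit]
          calc z * u * ((z - α) * star (z - α)) * q.eval z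
              = ((z - α) * star (z - α)) * (z * (u * q.eval z)) := by ring
            _ = ((z - α) * star (z - α)) * (z * Q.eval z) := by rw [← e5]
            _ = ((z - α) * star (z - α))
                * (z * (z^n * ∑ k ∈ Finset.Icc (-(n:ℤ)) (n:ℤ), c' k * z ^ (-k))) := by rw [e2]
            _ = _ := by ring
        exact mul_left_cancel₀ hzN e6
      have hoff : ∀ z : ℂ, ‖z‖ = 1 → z ≠ α →
          0 ≤ ∑ k ∈ Finset.Icc (-(n:ℤ)) (n:ℤ), c' k * z ^ (-k) := by
        intro z hz hzα
        have hkey' := hkey z hz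
        have ht : (z - α) * star (z - α) = ((Complex.normSq (z - α) : ℝ) : ℂ) := by
          rw [Complex.star_def]; exact Complex.mul_conj (z - α)
        have htpos : 0 < Complex.normSq (z - α) := Complex.normSq_pos.mpr (sub_ne_zero.mpr hzα)
        apply pos_real_mul_nonneg htpos
        rw [← ht, ← hkey']
        exact hnn z hz
      have hS'nn : ∀ z : ℂ, ‖z‖ = 1 →
          0 ≤ ∑ k ∈ Finset.Icc (-(n:ℤ)) (n:ℤ), c' k * z ^ (-k) := by
        intro z hz
        by_cases hzα : z = α
        · have hαc1 : ‖α‖ = 1 := hzα ▸ hz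
          have hGc : ContinuousAt
              (fun w : ℂ => ∑ k ∈ Finset.Icc (-(n:ℤ)) (n:ℤ), c' k * w ^ (-k)) α := by
            apply tendsto_finset_sum
            intro k _
            exact ContinuousAt.mul continuousAt_const (continuousAt_zpow₀ α (-k) (Or.inl hα0))
          rw [hzα]
          exact circle_limit α hαc1 _ hGc (fun w hw hwz => hoff w hw hwz)
        · exact hoff z hz hzα
      have hsymm' : ∀ k : ℤ, c' (-k) = star (c' k) := by
        have hvan := trig_coeffs_zero n (fun k => star (c' (-k)) - c' k) (by
          intro z hz
          have h1 : ∑ k ∈ Finset.Icc (-(n:ℤ)) (n:ℤ), (star (c' (-k)) - c' k) * z ^ (-k)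
              = (∑ k ∈ Finset.Icc (-(n:ℤ)) (n:ℤ), star (c' (-k)) * z ^ (-k))
                - ∑ k ∈ Finset.Icc (-(n:ℤ)) (n:ℤ), c' k * z ^ (-k) := by
            rw [← Finset.sum_sub_distrib]
            exact Finset.sum_congr rfl (fun k _ => by ring)
          rw [h1, ← star_trig_sum n c' hz, star_eq_self_of_nonneg (hS'nn z hz), sub_self])
        intro k
        by_cases hk : -(n:ℤ) ≤ k ∧ k ≤ (n:ℤ)
        · have h2 := hvan (-k) (Finset.mem_Icc.mpr (by omega))
          simp only [neg_neg] at h2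
          exact (sub_eq_zero.mp h2).symm
        · have hk1 : c' k = 0 := by rw [hc'def]; simp only; rw [if_neg hk]
          have hk2 : c' (-k) = 0 := by rw [hc'def]; simp only; rw [if_neg (by omega)]
          rw [hk1, hk2, star_zero]
      obtain ⟨h₁, hdeg₁, hval₁⟩ := ih c' hsymm' hS'nn
      refine ⟨(Polynomial.X - Polynomial.C α) * h₁, ?_, ?_⟩
      · refine (Polynomial.natDegree_mul_le).trans ?_
        rw [Polynomial.natDegree_X_sub_C]
        omega
      · intro z hz
        rw [hkey z hz, hval₁ z hz]
        simp only [Polynomial.eval_mul, Polynomial.eval_sub, Polynomial.eval_X,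
          Polynomial.eval_C, star_mul']
        ring


/-- SOS certificate of nonnegativity for trigonometric polynomials.
A trigonometric polynomial `f(z) = ∑_{k=-N}^N c_k z^{-k}` with `c_{-k} = conj (c_k)`
is nonnegative on the unit circle iff it is a sum of squares of complex
polynomials of degree at most `N`. -/
theorem sos_certificate_of_nonnegativity (N : ℕ) (c : ℤ → ℂ)
    (hsymm : ∀ k : ℤ, c (-k) = star (c k)) :
    (∀ z : ℂ, ‖z‖ = 1 →
        0 ≤ ∑ k ∈ Finset.Icc (-(N : ℤ)) (N : ℤ), c k * z ^ (-k)) ↔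
    (∃ (r : ℕ) (h : Fin r → Polynomial ℂ),
        (∀ j, (h j).natDegree ≤ N) ∧
        ∀ z : ℂ, ‖z‖ = 1 →
          (∑ k ∈ Finset.Icc (-(N : ℤ)) (N : ℤ), c k * z ^ (-k)) =
            ∑ j, (h j).eval z * star ((h j).eval z)) := by
  constructor
  · intro hnn
    obtain ⟨h, hdeg, hval⟩ := fejer_riesz N c hsymm hnn
    exact ⟨1, fun _ => h, fun _ => hdeg, fun z hz => by rw [hval z hz, Fin.sum_univ_one]⟩
  · rintro ⟨r, h, hdeg, hval⟩ z hz
    rw [hval z hz]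
    apply Finset.sum_nonneg
    intro j _
    rw [Complex.star_def, Complex.mul_conj]
    exact Complex.zero_le_real.mpr (Complex.normSq_nonneg _)
end

section
/- Let N ≥ 0 and let f(z) = ∑_{k=-N}^{N} c_k z^{-k} be a trigonometric polynomial of degree N. Then f is a sum of squares (there exist complex polynomials h_1, …, h_r of degree at most N with f(z) = ∑_j h_j(z)·conj(h_j(z)) on the unit circle) if and only if there exists a positive semidefinite Hermitian matrix Q ∈ ℂ^{(N+1)×(N+1)} that is a Gram matrix of f, i.e., f(z) = ψ(z)* Q ψ(z) for all z with |z| = 1, where ψ(z) = (1, z, …, z^N)ᵀ. -/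
open Matrix BigOperators ComplexOrder

lemma key_sos {n r : ℕ} (A : Matrix (Fin r) (Fin n) ℂ) (v : Fin n → ℂ) :
    star v ⬝ᵥ (Aᴴ * A).mulVec v = ∑ j, A.mulVec v j * star (A.mulVec v j) := by
  rw [← Matrix.mulVec_mulVec, Matrix.dotProduct_mulVec, ← Matrix.star_mulVec]
  simp [dotProduct, mul_comm]

lemma eval_eq_mulVec {N r : ℕ} (h : Fin r → Polynomial ℂ) (hdeg : ∀ j, (h j).natDegree ≤ N)
    (z : ℂ) (j : Fin r) :
    (h j).eval z = (Matrix.of fun j (i : Fin (N + 1)) => (h j).coeff (i : ℕ)).mulVec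
      (fun i : Fin (N + 1) => z ^ (i : ℕ)) j := by
  rw [Polynomial.eval_eq_sum_range' (Nat.lt_succ_of_le (hdeg j))]
  simp only [Matrix.mulVec, dotProduct, Matrix.of_apply]
  rw [← Finset.sum_range fun i => (h j).coeff i * z ^ i]

/-- SOS iff existence of a PSD Gram matrix.
A trigonometric polynomial `f(z) = ∑_{k=-N}^N c_k z^{-k}` is a sum of squares of
complex polynomials of degree at most `N` iff there exists a positive semidefinite
Hermitian matrix `Q` with `f(z) = ψ(z)* Q ψ(z)` on the unit circle, where
`ψ(z) = (1, z, …, z^N)ᵀ`. -/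
theorem sos_iff_psd_gram_matrix (N : ℕ) (c : ℤ → ℂ)
    (hsymm : ∀ k : ℤ, c (-k) = star (c k)) :
    (∃ (r : ℕ) (h : Fin r → Polynomial ℂ),
        (∀ j, (h j).natDegree ≤ N) ∧
        ∀ z : ℂ, ‖z‖ = 1 →
          (∑ k ∈ Finset.Icc (-(N : ℤ)) (N : ℤ), c k * z ^ (-k)) =
            ∑ j, (h j).eval z * star ((h j).eval z)) ↔
    (∃ Q : Matrix (Fin (N + 1)) (Fin (N + 1)) ℂ, Q.PosSemidef ∧
        ∀ z : ℂ, ‖z‖ = 1 →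
          (∑ k ∈ Finset.Icc (-(N : ℤ)) (N : ℤ), c k * z ^ (-k)) =
            star (fun i : Fin (N + 1) => z ^ (i : ℕ)) ⬝ᵥ
              Q.mulVec (fun i : Fin (N + 1) => z ^ (i : ℕ))) := by
  constructor
  · rintro ⟨r, h, hdeg, hval⟩
    set A : Matrix (Fin r) (Fin (N + 1)) ℂ := Matrix.of fun j (i : Fin (N + 1)) => (h j).coeff (i : ℕ) with hA
    refine ⟨Aᴴ * A, Matrix.posSemidef_conjTranspose_mul_self A, fun z hz => ?_⟩
    rw [hval z hz, key_sos]
    exact Finset.sum_congr rfl fun j _ => by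
      rw [← eval_eq_mulVec h hdeg z j]
  · rintro ⟨Q, hQ, hval⟩
    obtain ⟨B, rfl⟩ : ∃ B : Matrix (Fin (N + 1)) (Fin (N + 1)) ℂ, Q = Bᴴ * B := by
      open scoped MatrixOrder in exact CStarAlgebra.nonneg_iff_eq_star_mul_self.mp hQ.nonneg
    refine ⟨N + 1, fun j => ∑ i : Fin (N + 1), Polynomial.C (B j i) * Polynomial.X ^ (i : ℕ),
      fun j => ?_, fun z hz => ?_⟩
    · refine Polynomial.natDegree_sum_le_of_forall_le _ _ fun i _ => ?_
      calc (Polynomial.C (B j i) * Polynomial.X ^ (i : ℕ)).natDegree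
          ≤ (Polynomial.X ^ (i : ℕ) : Polynomial ℂ).natDegree := Polynomial.natDegree_C_mul_le _ _
        _ ≤ N := by rw [Polynomial.natDegree_X_pow]; exact Nat.lt_succ_iff.mp i.isLt
    · rw [hval z hz, key_sos]
      refine Finset.sum_congr rfl fun j _ => ?_
      have : ((∑ i : Fin (N + 1), Polynomial.C (B j i) * Polynomial.X ^ (i : ℕ)).eval z) =
          B.mulVec (fun i : Fin (N + 1) => z ^ (i : ℕ)) j := by
        simp [Matrix.mulVec, dotProduct, Polynomial.eval_finset_sum]
      rw [this]
end

section
/- (Generalized Schur complement lemma.) Let A ∈ ℝ^{n×n} and C ∈ ℝ^{m×m} be real symmetric matrices, let B ∈ ℝ^{m×n}, and let G ∈ ℝ^{m×m} be the Moore–Penrose pseudoinverse of C (i.e., G satisfies CGC = C, GCG = G, (CG)ᵀ = CG, (GC)ᵀ = GC). Then the block matrix M = [[A, Bᵀ], [B, C]] is positive semidefinite if and only if the following three conditions hold: C is positive semidefinite, (I − C G) B = 0, and A − Bᵀ G B is positive semidefinite. -/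
open Matrix

/-- Generalized Schur complement lemma.
Let `A`, `C` be real symmetric matrices, `B` a real matrix, and `G` the
Moore–Penrose pseudoinverse of `C`. Then the block matrix `[[A, Bᵀ], [B, C]]`
is positive semidefinite iff `C ⪰ 0`, `(I - C G) B = 0`, and `A - Bᵀ G B ⪰ 0`. -/
theorem generalized_schur_complement (n m : ℕ)
    (A : Matrix (Fin n) (Fin n) ℝ) (C G : Matrix (Fin m) (Fin m) ℝ)
    (B : Matrix (Fin m) (Fin n) ℝ)
    (hA : Aᵀ = A) (hC : Cᵀ = C)
    (hG1 : C * G * C = C) (hG2 : G * C * G = G)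
    (hG3 : (C * G)ᵀ = C * G) (hG4 : (G * C)ᵀ = G * C) :
    (Matrix.fromBlocks A Bᵀ B C).PosSemidef ↔
      (C.PosSemidef ∧ (1 - C * G) * B = 0 ∧ (A - Bᵀ * G * B).PosSemidef) := by
  set M := Matrix.fromBlocks A Bᵀ B C with hMdef
  set K : Matrix (Fin n ⊕ Fin m) (Fin n ⊕ Fin m) ℝ := fromBlocks 1 0 (-(G*B)) 1 with hKdef
  set L : Matrix (Fin n ⊕ Fin m) (Fin n ⊕ Fin m) ℝ := fromBlocks 1 0 (G*B) 1 with hLdef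
  -- the key congruence identity
  have key : C * G * B = B →
      Kᵀ * M * K = fromBlocks (A - Bᵀ * G * B) 0 0 C := by
    intro hCGB
    have hBGC : Bᵀ * Gᵀ * C = Bᵀ := by
      have := congrArg Matrix.transpose hCGB
      simpa [Matrix.transpose_mul, hC, Matrix.mul_assoc] using this
    rw [hMdef, hKdef, fromBlocks_transpose, Matrix.mul_assoc, fromBlocks_multiply,
      fromBlocks_multiply]
    rw [fromBlocks_inj]
    refine ⟨?_, ?_, ?_, by simp⟩
    · simp only [Matrix.one_mul, Matrix.mul_one, Matrix.zero_mul, Matrix.mul_zero,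
        transpose_neg, transpose_mul, transpose_one, transpose_zero, add_zero, zero_add,
        Matrix.neg_mul, Matrix.mul_neg, neg_neg, Matrix.mul_add, Matrix.add_mul]
      rw [show C * (G * B) = B by rw [← Matrix.mul_assoc, hCGB]]
      abel_nf
      rw [Matrix.mul_assoc]
    · simp only [Matrix.one_mul, Matrix.mul_one, Matrix.zero_mul, Matrix.mul_zero,
        transpose_neg, transpose_mul, transpose_one, transpose_zero, add_zero, zero_add,
        Matrix.neg_mul, Matrix.mul_neg, neg_neg]
      rw [hBGC]
      simp
    · simp only [Matrix.one_mul, Matrix.mul_one, Matrix.zero_mul, Matrix.mul_zero,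
        transpose_neg, transpose_mul, transpose_one, transpose_zero, add_zero, zero_add,
        Matrix.neg_mul, Matrix.mul_neg, neg_neg]
      rw [show C * (G * B) = B by rw [← Matrix.mul_assoc, hCGB]]
      simp
  constructor
  · intro h
    -- C is PSD
    have hCsub : M.submatrix Sum.inr Sum.inr = C := by ext i j; rfl
    have hCpsd : C.PosSemidef := hCsub ▸ h.submatrix Sum.inr
    -- kernel inclusion
    have hker : ∀ z : Fin m → ℝ, C *ᵥ z = 0 → Bᵀ *ᵥ z = 0 := by
      intro z hz
      set w : Fin n → ℝ := Bᵀ *ᵥ z with hw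
      set s : ℝ := w ⬝ᵥ w with hs
      set a : ℝ := w ⬝ᵥ (A *ᵥ w) with ha
      have hs0 : 0 ≤ s := by
        rw [hs]
        exact Finset.sum_nonneg fun i _ => mul_self_nonneg _
      have hann : 0 ≤ a := by
        have := h.dotProduct_mulVec_nonneg (Sum.elim w 0)
        simpa [hMdef, fromBlocks_mulVec, mulVec_zero, sumElim_dotProduct_sumElim] using this
      have hq : ∀ t : ℝ, 0 ≤ a * t ^ 2 + 2 * t * s := by
        intro t
        have := h.dotProduct_mulVec_nonneg (Sum.elim (t • w) z)
        rw [hMdef] at this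
        simp only [star_trivial, fromBlocks_mulVec, sumElim_dotProduct_sumElim, hz,
          Sum.elim_comp_inl, Sum.elim_comp_inr, mulVec_smul, dotProduct_add, add_zero,
          smul_dotProduct, dotProduct_smul, smul_eq_mul] at this
        have hzB : z ⬝ᵥ (B *ᵥ w) = s := by
          rw [hs, hw, dotProduct_mulVec, ← Matrix.mulVec_transpose]
        rw [hzB] at this
        have hwB : w ⬝ᵥ (Bᵀ *ᵥ z) = s := by rw [hs, hw]
        rw [hwB] at this
        nlinarith [this]
      have hseq : s = 0 := by
        set t : ℝ := -s / (a + 1) with htdef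
        have hap : (0:ℝ) < a + 1 := by linarith
        have ht : t * (a + 1) = -s := by
          rw [htdef]; field_simp
        have ht2 : t ^ 2 ≤ 0 := by nlinarith [hq t]
        have : t = 0 := by nlinarith [sq_nonneg t]
        rw [this] at ht; linarith [ht]
      have : w = 0 := dotProduct_self_eq_zero.mp hseq
      exact this
    -- (1 - C*G) * B = 0
    have hNC : (1 - C * G) * C = 0 := by
      rw [Matrix.sub_mul, Matrix.one_mul, hG1, sub_self]
    have hCN : C * (1 - C * G) = 0 := by
      have : (1 - C * G)ᵀ = 1 - C * G := by
        rw [transpose_sub, transpose_one, hG3]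
      calc C * (1 - C * G) = ((1 - C * G)ᵀ * Cᵀ)ᵀ := by
            rw [← transpose_mul, transpose_transpose]
        _ = ((1 - C * G) * C)ᵀ := by rw [this, hC]
        _ = 0 := by rw [hNC, transpose_zero]
    have hBN : Bᵀ * (1 - C * G) = 0 := by
      ext i j
      have hcol : C *ᵥ (fun k => (1 - C * G) k j) = 0 := by
        ext i'
        have := congrFun (congrFun hCN i') j
        simpa [Matrix.mul_apply, Matrix.mulVec, dotProduct] using this
      have := congrFun (hker _ hcol) i
      simpa [Matrix.mul_apply, Matrix.mulVec, dotProduct] using this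
    have hNB : (1 - C * G) * B = 0 := by
      have hsym : (1 - C * G)ᵀ = 1 - C * G := by
        rw [transpose_sub, transpose_one, hG3]
      calc (1 - C * G) * B = (Bᵀ * (1 - C * G)ᵀ)ᵀ := by
            rw [← transpose_mul, transpose_transpose]
        _ = (Bᵀ * (1 - C * G))ᵀ := by rw [hsym]
        _ = 0 := by rw [hBN, transpose_zero]
    have hCGB : C * G * B = B := by
      have := hNB
      rw [Matrix.sub_mul, Matrix.one_mul, sub_eq_zero] at this
      exact this.symm
    refine ⟨hCpsd, hNB, ?_⟩
    -- S is PSD via congruence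
    have hD : (fromBlocks (A - Bᵀ * G * B) 0 0 C : Matrix (Fin n ⊕ Fin m) (Fin n ⊕ Fin m) ℝ).PosSemidef := by
      rw [← key hCGB]
      have := h.conjTranspose_mul_mul_same K
      rwa [conjTranspose_eq_transpose_of_trivial] at this
    have hSsub : (fromBlocks (A - Bᵀ * G * B) 0 0 C :
        Matrix (Fin n ⊕ Fin m) (Fin n ⊕ Fin m) ℝ).submatrix Sum.inl Sum.inl = A - Bᵀ * G * B := by
      ext i j; rfl
    exact hSsub ▸ hD.submatrix Sum.inl
  · rintro ⟨hCpsd, hNB, hSpsd⟩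
    have hCGB : C * G * B = B := by
      rw [Matrix.sub_mul, Matrix.one_mul, sub_eq_zero] at hNB
      exact hNB.symm
    -- the block diagonal matrix is PSD
    have hD : (fromBlocks (A - Bᵀ * G * B) 0 0 C :
        Matrix (Fin n ⊕ Fin m) (Fin n ⊕ Fin m) ℝ).PosSemidef := by
      refine posSemidef_iff_dotProduct_mulVec.mpr ⟨?_, ?_⟩
      · exact isHermitian_fromBlocks_iff.mpr ⟨hSpsd.1, by simp, by simp, hCpsd.1⟩
      · intro v
        have hv : Sum.elim (v ∘ Sum.inl) (v ∘ Sum.inr) = v := Sum.elim_comp_inl_inr v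
        rw [← hv]
        simp only [star_trivial, fromBlocks_mulVec, zero_mulVec, add_zero, zero_add,
          sumElim_dotProduct_sumElim]
        have h1 := hSpsd.dotProduct_mulVec_nonneg (v ∘ Sum.inl)
        have h2 := hCpsd.dotProduct_mulVec_nonneg (v ∘ Sum.inr)
        simp only [star_trivial] at h1 h2
        exact add_nonneg h1 h2
    -- K * L = 1
    have hKL : K * L = 1 := by
      rw [hKdef, hLdef, fromBlocks_multiply]
      simp [fromBlocks_one]
    -- M = Lᵀ * D * L
    have hMeq : M = Lᵀ * (fromBlocks (A - Bᵀ * G * B) 0 0 C) * L := by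
      rw [← key hCGB]
      rw [Matrix.mul_assoc, Matrix.mul_assoc, Matrix.mul_assoc, hKL, Matrix.mul_one,
        ← Matrix.mul_assoc, ← transpose_mul, hKL, transpose_one, Matrix.one_mul]
    have := hD.conjTranspose_mul_mul_same L
    rwa [conjTranspose_eq_transpose_of_trivial, ← hMeq] at this
end

section
/- Let X ∈ ℝ^{m×m} and L ∈ ℝ^{n×n} be real symmetric matrices, let F ∈ ℝ^{n×m}, and let G be the Moore–Penrose pseudoinverse of L. If the block matrix [[X, Fᵀ], [F, L]] is positive semidefinite, then: (i) X − Fᵀ G F is positive semidefinite; (ii) tr(X − Fᵀ G F) ≥ 0; and (iii) tr(X − Fᵀ G F) = 0 if and only if X = Fᵀ G F. -/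
open Matrix

/-- A real PSD matrix has nonnegative diagonal entries. -/
lemma psd_diag_nonneg' {k : ℕ} {A : Matrix (Fin k) (Fin k) ℝ}
    (hA : A.PosSemidef) (i : Fin k) : 0 ≤ A i i := by
  have h := hA.dotProduct_mulVec_nonneg (Pi.single i 1)
  simpa [dotProduct, mulVec, Pi.single_apply, Finset.sum_ite_eq,
    Finset.sum_ite_eq'] using h

/-- A real PSD matrix has nonnegative trace. -/
lemma psd_trace_nonneg' {k : ℕ} {A : Matrix (Fin k) (Fin k) ℝ}
    (hA : A.PosSemidef) : 0 ≤ A.trace := by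
  rw [Matrix.trace]
  exact Finset.sum_nonneg fun i _ => psd_diag_nonneg' hA i

/-- A real PSD matrix with zero trace is zero. -/
lemma psd_trace_eq_zero' {k : ℕ} {A : Matrix (Fin k) (Fin k) ℝ}
    (hA : A.PosSemidef) (h : A.trace = 0) : A = 0 := by
  have hdiag : ∀ i, A i i = 0 := by
    have := (Finset.sum_eq_zero_iff_of_nonneg
      (fun i _ => psd_diag_nonneg' hA i)).mp h
    intro i; exact this i (Finset.mem_univ i)
  ext j i
  have hcol : A *ᵥ Pi.single i 1 = 0 := by
    rw [← hA.dotProduct_mulVec_zero_iff]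
    have e : star (Pi.single i (1:ℝ)) ⬝ᵥ A *ᵥ Pi.single i 1 = A i i := by
      simp [dotProduct, mulVec, Pi.single_apply, Finset.sum_ite_eq,
        Finset.sum_ite_eq']
    rw [e, hdiag]
  have := congrFun hcol j
  simpa [mulVec, dotProduct, Pi.single_apply, Finset.sum_ite_eq,
    Finset.sum_ite_eq'] using this

/-- The Moore–Penrose pseudoinverse of a real symmetric matrix is symmetric. -/
lemma pinv_symm' {n : ℕ} (L G : Matrix (Fin n) (Fin n) ℝ)
    (hL : Lᵀ = L)
    (hG1 : L * G * L = L) (hG2 : G * L * G = G)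
    (hG3 : (L * G)ᵀ = L * G) (hG4 : (G * L)ᵀ = G * L) : Gᵀ = G := by
  have hLH : L * Gᵀ = G * L := by rw [← hG4, transpose_mul, hL]
  have hHL : Gᵀ * L = L * G := by rw [← hG3, transpose_mul, hL]
  have h1 : L * Gᵀ * L = L := by
    have e : L * Gᵀ * L = (L * G * L)ᵀ := by
      simp [transpose_mul, hL, mul_assoc]
    rw [e, hG1, hL]
  have hi : L * G = L * Gᵀ := by
    calc L * G = (L * Gᵀ * L) * G := by rw [h1]
    _ = (L * Gᵀ) * (L * G) := by simp [mul_assoc]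
    _ = (L * Gᵀ)ᵀ * (L * G)ᵀ := by rw [hG3, hLH, hG4]
    _ = G * (L * Gᵀ * L) := by simp [transpose_mul, hL, mul_assoc]
    _ = G * L := by rw [h1]
    _ = L * Gᵀ := hLH.symm
  have hii : G * L = Gᵀ * L := by
    calc G * L = G * (L * Gᵀ * L) := by rw [h1]
    _ = (G * L) * (Gᵀ * L) := by simp [mul_assoc]
    _ = (G * L)ᵀ * (Gᵀ * L)ᵀ := by rw [hG4, hHL, hG3]
    _ = (L * Gᵀ * L) * G := by simp [transpose_mul, hL, mul_assoc]
    _ = L * G := by rw [h1]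
    _ = Gᵀ * L := hHL.symm
  have h2 : Gᵀ * L * Gᵀ = Gᵀ := by
    have e : Gᵀ * L * Gᵀ = (G * L * G)ᵀ := by
      simp [transpose_mul, hL, mul_assoc]
    rw [e, hG2]
  calc Gᵀ = Gᵀ * L * Gᵀ := h2.symm
  _ = Gᵀ * (L * G) := by rw [hi, mul_assoc]
  _ = (Gᵀ * L) * G := by rw [mul_assoc]
  _ = (G * L) * G := by rw [hii]
  _ = G := hG2

/-- If the block matrix `[[X, Fᵀ], [F, L]]` is positive
semidefinite, where `L` has Moore–Penrose pseudoinverse `G`, then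
`X - Fᵀ G F ⪰ 0`, `tr(X - Fᵀ G F) ≥ 0`, and `tr(X - Fᵀ G F) = 0` iff
`X = Fᵀ G F`. -/
theorem trace_inequality_of_block_posSemidef (n m : ℕ)
    (X : Matrix (Fin m) (Fin m) ℝ) (L G : Matrix (Fin n) (Fin n) ℝ)
    (F : Matrix (Fin n) (Fin m) ℝ)
    (hX : Xᵀ = X) (hL : Lᵀ = L)
    (hG1 : L * G * L = L) (hG2 : G * L * G = G)
    (hG3 : (L * G)ᵀ = L * G) (hG4 : (G * L)ᵀ = G * L)
    (hPSD : (Matrix.fromBlocks X Fᵀ F L).PosSemidef) :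
    (X - Fᵀ * G * F).PosSemidef ∧
      0 ≤ (X - Fᵀ * G * F).trace ∧
      ((X - Fᵀ * G * F).trace = 0 ↔ X = Fᵀ * G * F) := by
  have hGsym : Gᵀ = G := pinv_symm' L G hL hG1 hG2 hG3 hG4
  have key := hPSD.conjTranspose_mul_mul_same
    (fromRows (1 : Matrix (Fin m) (Fin m) ℝ) (-(G*F)))
  have hB : (fromRows (1 : Matrix (Fin m) (Fin m) ℝ) (-(G*F)))ᴴ * (fromBlocks X Fᵀ F L) *
      (fromRows (1 : Matrix (Fin m) (Fin m) ℝ) (-(G*F))) = X - Fᵀ*G*F := by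
    rw [conjTranspose_fromRows_eq_fromCols_conjTranspose, Matrix.mul_assoc,
      fromBlocks_mul_fromRows, fromCols_mul_fromRows]
    have hCT : (G * F)ᴴ = Fᵀ * G := by
      rw [show (G * F)ᴴ = (G * F)ᵀ from rfl, transpose_mul, hGsym]
    have hGLGF : G * (L * (G * F)) = G * F := by
      rw [← Matrix.mul_assoc, ← Matrix.mul_assoc, hG2]
    rw [conjTranspose_neg, hCT]
    simp only [Matrix.one_mul, Matrix.mul_one, Matrix.neg_mul, Matrix.mul_neg,
      conjTranspose_one, Matrix.mul_add, Matrix.add_mul, neg_neg]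
    rw [Matrix.mul_assoc Fᵀ G (L * (G * F)), hGLGF, ← Matrix.mul_assoc Fᵀ G F]
    abel
  rw [hB] at key
  refine ⟨key, psd_trace_nonneg' key, ?_, ?_⟩
  · intro h
    have := psd_trace_eq_zero' key h
    rw [sub_eq_zero] at this
    exact this
  · intro h
    rw [h, sub_self, Matrix.trace_zero]
end
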